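/- Let m be a positive integer and suppose a, b ∈ M_m(ℂ) satisfy a² = b² = 0 and the ℂ-subalgebra generated by a and b is all of M_m(ℂ) (i.e. ℂ[a,b] = M_m(ℂ)). Then m ≤ 2. Furthermore, m = 1 if and only if a·b is nilpotent. -/

import Mathlib

open Matrix Module Submodule

/-- A matrix commuting with the two generators of a generating set is scalar. -/
lemma aux_central {m : ℕ} (a b x : Matrix (Fin m) (Fin m) ℂ)
    (hgen : Algebra.adjoin ℂ ({a, b} : Set (Matrix (Fin m) (Fin m) ℂ)) = ⊤)
    (hxa : x * a = a * x) (hxb : x * b = b * x) :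
    ∃ c : ℂ, x = c • (1 : Matrix (Fin m) (Fin m) ℂ) := by
  have hcomm : ∀ y : Matrix (Fin m) (Fin m) ℂ, x * y = y * x := by
    intro y
    have hy : y ∈ Algebra.adjoin ℂ ({a, b} : Set (Matrix (Fin m) (Fin m) ℂ)) := by
      rw [hgen]; trivial
    induction hy using Algebra.adjoin_induction with
    | mem z hz =>
      rcases hz with rfl | rfl
      · exact hxa
      · exact hxb
    | algebraMap r => exact (Algebra.commutes r x).symm
    | add y z hy hz ihy ihz => rw [mul_add, add_mul, ihy, ihz]
    | mul y z hy hz ihy ihz => rw [← mul_assoc, ihy, mul_assoc, ihz, ← mul_assoc]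
  obtain ⟨c, hc⟩ := Matrix.mem_range_scalar_of_commute_single
      (M := x) (fun i j _ => (hcomm _).symm)
  refine ⟨c, ?_⟩
  rw [← hc]
  ext i j
  by_cases h : i = j <;> simp [h, Matrix.scalar_apply, Matrix.one_apply]

/-- A scalar matrix whose square is zero has zero scalar (when `m > 0`). -/
lemma aux_scalar_sq_zero {m : ℕ} (hm : 0 < m) (c : ℂ)
    (h : (c • (1 : Matrix (Fin m) (Fin m) ℂ)) * (c • 1) = 0) : c = 0 := by
  rw [smul_mul_assoc, mul_smul_comm, one_mul, smul_smul] at h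
  have h2 := congrFun (congrFun h ⟨0, hm⟩) ⟨0, hm⟩
  simpa [Matrix.one_apply, mul_self_eq_zero] using h2

theorem dim_le_two_of_generated_by_square_zero (m : ℕ) (hm : 0 < m)
    (a b : Matrix (Fin m) (Fin m) ℂ) (ha : a ^ 2 = 0) (hb : b ^ 2 = 0)
    (hgen : Algebra.adjoin ℂ ({a, b} : Set (Matrix (Fin m) (Fin m) ℂ)) = ⊤) :
    m ≤ 2 ∧ (m = 1 ↔ IsNilpotent (a * b)) := by
  have ha' : a * a = 0 := by simpa [sq] using ha
  have hb' : b * b = 0 := by simpa [sq] using hb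
  have e1 : ∀ x y : Matrix (Fin m) (Fin m) ℂ, x * x = 0 →
      (x * y + y * x) * x = x * (x * y + y * x) := by
    intro x y hx
    rw [add_mul, mul_add, mul_assoc y x x, hx, mul_zero, add_zero,
      ← mul_assoc x x y, hx, zero_mul, zero_add, mul_assoc]
  -- the element a*b + b*a is central, hence a scalar l
  obtain ⟨l, hl⟩ : ∃ c : ℂ, a * b + b * a = c • 1 := by
    apply aux_central a b _ hgen
    · exact e1 a b ha'
    · rw [add_comm]; exact e1 b a hb'
  have hba : b * a = l • 1 - a * b := eq_sub_of_add_eq' hl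
  -- key multiplication identities
  have hbab : b * (a * b) = l • b := by
    rw [← mul_assoc, hba, sub_mul, smul_mul_assoc, one_mul, mul_assoc, hb',
      mul_zero, sub_zero]
  have haba : (a * b) * a = l • a := by
    rw [mul_assoc, hba, mul_sub, mul_smul_comm, mul_one, ← mul_assoc, ha',
      zero_mul, sub_zero]
  have habab : (a * b) * (a * b) = l • (a * b) := by
    rw [← mul_assoc, haba, smul_mul_assoc]
  -- the span of 1, a, b, a*b is the whole algebra
  set S : Submodule ℂ (Matrix (Fin m) (Fin m) ℂ) :=
    span ℂ ({1, a, b, a * b} : Set (Matrix (Fin m) (Fin m) ℂ)) with hS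
  have h1 : (1 : Matrix (Fin m) (Fin m) ℂ) ∈ S := subset_span (by simp)
  have hA : a ∈ S := subset_span (by simp)
  have hB : b ∈ S := subset_span (by simp)
  have hAB : a * b ∈ S := subset_span (by simp)
  have hgenmul : ∀ x ∈ ({1, a, b, a * b} : Set (Matrix (Fin m) (Fin m) ℂ)),
      ∀ y ∈ ({1, a, b, a * b} : Set (Matrix (Fin m) (Fin m) ℂ)), x * y ∈ S := by
    simp only [Set.mem_insert_iff, Set.mem_singleton_iff]
    rintro x (rfl | rfl | rfl | rfl) y (rfl | rfl | rfl | rfl)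
    · simpa using h1
    · simpa using hA
    · simpa using hB
    · simpa using hAB
    · simpa using hA
    · rw [ha']; exact S.zero_mem
    · exact hAB
    · rw [← mul_assoc, ha', zero_mul]; exact S.zero_mem
    · simpa using hB
    · rw [hba]; exact S.sub_mem (S.smul_mem l h1) hAB
    · rw [hb']; exact S.zero_mem
    · rw [hbab]; exact S.smul_mem l hB
    · simpa using hAB
    · rw [haba]; exact S.smul_mem l hA
    · rw [mul_assoc, hb', mul_zero]; exact S.zero_mem
    · rw [habab]; exact S.smul_mem l hAB
  have hmul : ∀ x ∈ S, ∀ y ∈ S, x * y ∈ S := by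
    intro x hx
    induction hx using span_induction with
    | mem x hxv =>
      intro y hy
      induction hy using span_induction with
      | mem y hyv => exact hgenmul x hxv y hyv
      | zero => rw [mul_zero]; exact S.zero_mem
      | add y z _ _ ihy ihz => rw [mul_add]; exact S.add_mem ihy ihz
      | smul c y _ ihy => rw [mul_smul_comm]; exact S.smul_mem c ihy
    | zero => intro y hy; rw [zero_mul]; exact S.zero_mem
    | add x z _ _ ihx ihz =>
      intro y hy; rw [add_mul]; exact S.add_mem (ihx y hy) (ihz y hy)
    | smul c x _ ihx =>
      intro y hy; rw [smul_mul_assoc]; exact S.smul_mem c (ihx y hy)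
  have hStop : S = ⊤ := by
    rw [eq_top_iff']
    intro x
    have hx : x ∈ Algebra.adjoin ℂ ({a, b} : Set (Matrix (Fin m) (Fin m) ℂ)) := by
      rw [hgen]; trivial
    induction hx using Algebra.adjoin_induction with
    | mem z hz =>
      rcases hz with rfl | rfl
      · exact hA
      · exact hB
    | algebraMap r =>
      rw [Algebra.algebraMap_eq_smul_one]
      exact S.smul_mem r h1
    | add y z _ _ ihy ihz => exact S.add_mem ihy ihz
    | mul y z _ _ ihy ihz => exact hmul y ihy z ihz
  -- dimension bound
  have hrange : Set.range ![1, a, b, a * b] =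
      ({1, a, b, a * b} : Set (Matrix (Fin m) (Fin m) ℂ)) := by
    ext x
    simp [Fin.exists_fin_succ, or_assoc]
    tauto
  have hfr : finrank ℂ (Matrix (Fin m) (Fin m) ℂ) ≤ 4 := by
    have := finrank_le_of_span_eq_top (v := ![1, a, b, a * b])
      (by rw [hrange, ← hS, hStop])
    simpa using this
  have hfr' : finrank ℂ (Matrix (Fin m) (Fin m) ℂ) = m * m := by
    simp [Module.finrank_matrix]
  have hm2 : m ≤ 2 := by nlinarith [hfr' ▸ hfr]
  refine ⟨hm2, ?_, ?_⟩
  · -- m = 1 → nilpotent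
    rintro rfl
    have ha0 : a = 0 := by
      ext i j
      have hi : i = 0 := Subsingleton.elim i 0
      have hj : j = 0 := Subsingleton.elim j 0
      subst hi; subst hj
      have h2 := congrFun (congrFun ha' 0) 0
      simp [Matrix.mul_apply, Fin.sum_univ_one] at h2 ⊢
      exact h2
    rw [ha0, zero_mul]
    exact IsNilpotent.zero
  · -- nilpotent → m = 1
    intro hnil
    have hpow : ∀ k : ℕ, (a * b) ^ (k + 1) = l ^ k • (a * b) := by
      intro k
      induction k with
      | zero => simp
      | succ k ih => rw [pow_succ, ih, smul_mul_assoc, habab, smul_smul, ← pow_succ]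
    have key : a * b = 0 ∧ l = 0 := by
      obtain ⟨n, hn⟩ := hnil
      have hab0 : a * b = 0 := by
        rcases n with _ | n
        · rw [pow_zero] at hn
          have := congrFun (congrFun hn ⟨0, hm⟩) ⟨0, hm⟩
          simp [Matrix.one_apply] at this
        · rw [hpow n] at hn
          rcases smul_eq_zero.mp hn with h | h
          · rcases n with _ | n
            · simp at h
            · have hl0 : l = 0 := pow_eq_zero_iff (Nat.succ_ne_zero n) |>.mp h
              obtain ⟨c, hc⟩ : ∃ c : ℂ, a * b = c • 1 := by
                apply aux_central a b _ hgen
                · rw [haba, hl0, zero_smul, ← mul_assoc, ha', zero_mul]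
                · rw [mul_assoc, hb', mul_zero, hbab, hl0, zero_smul]
              have hc0 : c = 0 := by
                apply aux_scalar_sq_zero hm
                rw [← hc, habab, hl0, zero_smul]
              rw [hc, hc0, zero_smul]
          · exact h
      have hl0 : l = 0 := by
        have hba' : b * a = l • 1 := by rw [hba, hab0, sub_zero]
        have hz : (l • (1 : Matrix (Fin m) (Fin m) ℂ)) * (l • 1) = 0 := by
          rw [← hba', mul_assoc, ← mul_assoc a b, hab0, zero_mul, mul_zero]
        exact aux_scalar_sq_zero hm l hz
      exact ⟨hab0, hl0⟩
    obtain ⟨hab0, hl0⟩ := key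
    have hba0 : b * a = 0 := by rw [hba, hab0, hl0]; simp
    have ha0 : a = 0 := by
      obtain ⟨c, hc⟩ : ∃ c : ℂ, a = c • 1 :=
        aux_central a b a hgen rfl (by rw [hab0, hba0])
      have hc0 : c = 0 := aux_scalar_sq_zero hm c (by rw [← hc, ha'])
      rw [hc, hc0, zero_smul]
    have hb0 : b = 0 := by
      obtain ⟨c, hc⟩ : ∃ c : ℂ, b = c • 1 :=
        aux_central a b b hgen (by rw [hab0, hba0]) rfl
      have hc0 : c = 0 := aux_scalar_sq_zero hm c (by rw [← hc, hb'])
      rw [hc, hc0, zero_smul]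
    by_contra hne
    have hm2' : m = 2 := by omega
    have hbot : Algebra.adjoin ℂ ({a, b} : Set (Matrix (Fin m) (Fin m) ℂ)) ≤ ⊥ := by
      apply Algebra.adjoin_le
      rintro x (rfl | rfl)
      · rw [ha0]; exact Subalgebra.zero_mem _
      · rw [hb0]; exact Subalgebra.zero_mem _
    have hE : (Matrix.single (⟨0, by omega⟩ : Fin m) (⟨1, by omega⟩ : Fin m)
        (1 : ℂ)) ∈ (⊥ : Subalgebra ℂ (Matrix (Fin m) (Fin m) ℂ)) := by
      apply hbot
      rw [hgen]; trivial
    rw [Algebra.mem_bot] at hE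
    obtain ⟨c, hc⟩ := hE
    have hco := congrFun (congrFun hc ⟨0, by omega⟩) ⟨1, by omega⟩
    simp [Matrix.algebraMap_matrix_apply, Matrix.single, Fin.ext_iff] at hco
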